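/- Given two non-negative integers n and k with n ≥ k > 1, a non-decreasing sequence R = [r₁, r₂, ..., r_n] of non-negative integers is the losing score sequence of some k-hypertournament on n vertices if and only if for each j with 1 ≤ j ≤ n, ∑_{i=1}^{j} r_i ≥ C(j,k), with equality when j = n (where C(j,k) denotes the binomial coefficient, taken to be 0 when j < k). -/

import Mathlib

/-- A k-hypertournament on the vertex set `Fin n`: a set of arcs, each a
duplicate-free k-tuple (list) of vertices, such that for every k-subset `S` of
the vertices there is exactly one arc whose set of entries is `S`. -/
structure Hypertournament (n k : ℕ) where
  arcs : Finset (List (Fin n))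
  nodup : ∀ e ∈ arcs, e.Nodup
  len : ∀ e ∈ arcs, e.length = k
  complete : ∀ S : Finset (Fin n), S.card = k → ∃! e, e ∈ arcs ∧ e.toFinset = S

/-- The losing score of a vertex `v`: the number of arcs containing `v` in which
`v` is the last entry. -/
def losingScore {n k : ℕ} (H : Hypertournament n k) (v : Fin n) : ℕ :=
  (H.arcs.filter (fun e => e.getLast? = some v)).card

/-- `r` (on indices `< n`) lists, up to order, the losing scores of the vertices
of some k-hypertournament. -/
def IsLosingScoreSequence (n k : ℕ) (r : ℕ → ℕ) : Prop :=
  ∃ (H : Hypertournament n k) (σ : Equiv.Perm (Fin n)),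
    ∀ i : Fin n, r i.val = losingScore H (σ i)

private lemma fin_strictMono_le {m n : ℕ} {f : Fin m → Fin n} (hf : StrictMono f) :
    ∀ v (h : v < m), v ≤ (f ⟨v, h⟩ : ℕ) := by
  intro v
  induction v with
  | zero => intro h; exact Nat.zero_le _
  | succ v ih =>
    intro h
    have hv : v < m := Nat.lt_of_succ_lt h
    have h1 := ih hv
    have h2 : f ⟨v, hv⟩ < f ⟨v + 1, h⟩ := hf (by simp [Fin.lt_def])
    have h3 := Fin.lt_def.mp h2
    omega

private lemma sorted_sum_le {n : ℕ} (r : ℕ → ℕ) (hr : ∀ i j, i ≤ j → j < n → r i ≤ r j)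
    (W : Finset (Fin n)) : ∑ i ∈ Finset.range W.card, r i ≤ ∑ v ∈ W, r v.val := by
  classical
  set m := W.card with hm
  set f := W.orderEmbOfFin hm.symm with hfdef
  have hsum : ∑ v ∈ W, r v.val = ∑ i : Fin m, r (f i).val := by
    refine (Finset.sum_bij (i := fun (i : Fin m) _ => f i) ?_ ?_ ?_ ?_).symm
    · intro i _; exact W.orderEmbOfFin_mem hm.symm i
    · intro a _ b _ h; exact f.injective h
    · intro v hv
      have : v ∈ Set.range f := by
        rw [Finset.range_orderEmbOfFin]; exact hv
      obtain ⟨i, hi⟩ := this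
      exact ⟨i, Finset.mem_univ i, hi⟩
    · intro a _; rfl
  rw [hsum, ← Fin.sum_univ_eq_sum_range (fun i => r i) m]
  apply Finset.sum_le_sum
  intro i _
  exact hr i.val (f i).val (fin_strictMono_le f.strictMono i.val i.isLt) (f i).isLt

private lemma card_arcs_sub {n k : ℕ} (H : Hypertournament n k) (U : Finset (Fin n)) :
    (H.arcs.filter (fun e => e.toFinset ⊆ U)).card = U.card.choose k := by
  classical
  rw [← Finset.card_powersetCard k U]
  apply Finset.card_bij (i := fun e _ => e.toFinset)
  · intro e he
    rw [Finset.mem_filter] at he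
    rw [Finset.mem_powersetCard]
    exact ⟨he.2, by rw [List.toFinset_card_of_nodup (H.nodup e he.1), H.len e he.1]⟩
  · intro e1 h1 e2 h2 hee
    rw [Finset.mem_filter] at h1 h2
    have hcard : e1.toFinset.card = k := by
      rw [List.toFinset_card_of_nodup (H.nodup e1 h1.1), H.len e1 h1.1]
    obtain ⟨u, _, hun⟩ := H.complete e1.toFinset hcard
    exact (hun e1 ⟨h1.1, rfl⟩).trans (hun e2 ⟨h2.1, hee.symm⟩).symm
  · intro S hS
    rw [Finset.mem_powersetCard] at hS
    obtain ⟨e, ⟨he, het⟩, -⟩ := H.complete S hS.2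
    exact ⟨e, Finset.mem_filter.mpr ⟨he, het ▸ hS.1⟩, het⟩

private lemma arcs_ne_nil {n k : ℕ} (hk : 0 < k) (H : Hypertournament n k) :
    ∀ e ∈ H.arcs, e ≠ [] := by
  intro e he h
  have := H.len e he
  rw [h] at this
  simp at this
  omega

private lemma getLast?_eq_getLastD {n k : ℕ} (hk : 0 < k) (hn : 0 < n)
    (H : Hypertournament n k) :
    ∀ e ∈ H.arcs, e.getLast? = some (e.getLastD ⟨0, hn⟩) := by
  intro e he
  have hne := arcs_ne_nil hk H e he
  rw [List.getLast?_eq_getLast_of_ne_nil hne, List.getLastD_eq_getLast?,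
    List.getLast?_eq_getLast_of_ne_nil hne]
  rfl

private lemma sum_scores {n k : ℕ} (hk : 0 < k) (hn : 0 < n) (H : Hypertournament n k)
    (U : Finset (Fin n)) :
    ∑ v ∈ U, losingScore H v
      = (H.arcs.filter (fun e => e.getLastD ⟨0, hn⟩ ∈ U)).card := by
  classical
  have hld := getLast?_eq_getLastD hk hn H
  have hstep := Finset.card_eq_sum_card_fiberwise
    (f := fun e : List (Fin n) => e.getLastD ⟨0, hn⟩)
    (s := H.arcs.filter (fun e => e.getLastD ⟨0, hn⟩ ∈ U)) (t := U)
    (fun e he => (Finset.mem_filter.mp he).2)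
  rw [hstep]
  apply Finset.sum_congr rfl
  intro v hv
  unfold losingScore
  rw [Finset.filter_filter]
  congr 1
  ext e
  simp only [Finset.mem_filter]
  constructor
  · rintro ⟨he, hlast⟩
    have h1 : e.getLastD ⟨0, hn⟩ = v := by
      have := hld e he
      rw [hlast] at this
      exact (Option.some_inj.mp this).symm
    exact ⟨he, h1 ▸ hv, h1⟩
  · rintro ⟨he, -, h2⟩
    exact ⟨he, by rw [hld e he, h2]⟩

private lemma choose_le_sum_scores {n k : ℕ} (hk : 0 < k) (hn : 0 < n)
    (H : Hypertournament n k) (U : Finset (Fin n)) :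
    U.card.choose k ≤ ∑ v ∈ U, losingScore H v := by
  classical
  rw [sum_scores hk hn H U, ← card_arcs_sub H U]
  apply Finset.card_le_card
  intro e he
  rw [Finset.mem_filter] at he ⊢
  refine ⟨he.1, ?_⟩
  have hne := arcs_ne_nil hk H e he.1
  have hmem : e.getLastD ⟨0, hn⟩ ∈ e.toFinset := by
    rw [List.mem_toFinset]
    have h1 : e.getLastD ⟨0, hn⟩ = e.getLast hne := by
      rw [List.getLastD_eq_getLast?, List.getLast?_eq_getLast_of_ne_nil hne]
      rfl
    rw [h1]
    exact List.getLast_mem hne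
  exact he.2 hmem

private lemma total_scores {n k : ℕ} (hk : 0 < k) (hn : 0 < n) (H : Hypertournament n k) :
    ∑ v : Fin n, losingScore H v = n.choose k := by
  classical
  rw [sum_scores hk hn H Finset.univ,
    Finset.filter_true_of_mem (fun e _ => Finset.mem_univ _)]
  have h2 := card_arcs_sub H Finset.univ
  rw [Finset.filter_true_of_mem (fun e _ => Finset.subset_univ _)] at h2
  rw [h2, Finset.card_univ, Fintype.card_fin]

private lemma exists_score_function {n k : ℕ} (hk : 1 < k) (hn : k ≤ n) (r : ℕ → ℕ)
    (hr : ∀ i j, i ≤ j → j < n → r i ≤ r j)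
    (hineq : ∀ j, 1 ≤ j → j ≤ n → Nat.choose j k ≤ ∑ i ∈ Finset.range j, r i)
    (heq : ∑ i ∈ Finset.range n, r i = Nat.choose n k) :
    ∃ F : {S : Finset (Fin n) // S.card = k} → Fin n,
      (∀ S, F S ∈ S.val) ∧
      ∀ v : Fin n, (Finset.univ.filter (fun S => F S = v)).card = r v.val := by
  classical
  set t : {S : Finset (Fin n) // S.card = k} → Finset (Fin n × ℕ) :=
    fun S => S.val.biUnion (fun i => {i} ×ˢ Finset.range (r i.val)) with ht
  have hall : ∀ A : Finset {S : Finset (Fin n) // S.card = k},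
      A.card ≤ (A.biUnion t).card := by
    intro A
    rcases A.eq_empty_or_nonempty with h | h
    · simp [h]
    set W : Finset (Fin n) := A.biUnion (fun S => S.val) with hW
    have hbu : A.biUnion t = W.biUnion (fun i => {i} ×ˢ Finset.range (r i.val)) := by
      ext x
      simp only [ht, hW, Finset.mem_biUnion, Finset.mem_product, Finset.mem_singleton,
        Finset.mem_range]
      tauto
    have hcard : (W.biUnion (fun i => {i} ×ˢ Finset.range (r i.val))).card
        = ∑ i ∈ W, r i.val := by
      rw [Finset.card_biUnion]
      · apply Finset.sum_congr rfl
        intro i _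
        simp
      · intro x _ y _ hxy
        simp only [Function.onFun]
        rw [Finset.disjoint_left]
        rintro ⟨a, b⟩ hx hy
        simp only [Finset.mem_product, Finset.mem_singleton] at hx hy
        exact hxy (hx.1.symm.trans hy.1)
    have hA : A.card ≤ W.card.choose k := by
      rw [← Finset.card_powersetCard k W]
      apply Finset.card_le_card_of_injOn (f := fun S => S.val)
      · intro S hS
        rw [Finset.mem_coe, Finset.mem_powersetCard]
        exact ⟨fun x hx => Finset.mem_biUnion.mpr ⟨S, hS, hx⟩, S.2⟩
      · exact fun a _ b _ hab => Subtype.ext hab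
    have hWn : W.card ≤ n := (Finset.card_le_univ W).trans_eq (by simp)
    have hW1 : 1 ≤ W.card := by
      obtain ⟨S, hS⟩ := h
      have hne : S.val.Nonempty := Finset.card_pos.mp (by rw [S.2]; omega)
      obtain ⟨x, hx⟩ := hne
      exact Finset.card_pos.mpr ⟨x, Finset.mem_biUnion.mpr ⟨S, hS, hx⟩⟩
    calc A.card ≤ W.card.choose k := hA
      _ ≤ ∑ i ∈ Finset.range W.card, r i := hineq _ hW1 hWn
      _ ≤ ∑ i ∈ W, r i.val := sorted_sum_le r hr W
      _ = (A.biUnion t).card := by rw [hbu, hcard]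
  obtain ⟨g, hginj, hg⟩ := (Finset.all_card_le_biUnion_card_iff_exists_injective t).mp hall
  have hmem : ∀ S, (g S).1 ∈ S.val ∧ (g S).2 < r (g S).1.val := by
    intro S
    have h := hg S
    simp only [ht, Finset.mem_biUnion, Finset.mem_product, Finset.mem_singleton,
      Finset.mem_range] at h
    obtain ⟨i, hi, h1, h2⟩ := h
    exact ⟨h1 ▸ hi, h1 ▸ h2⟩
  set F : {S : Finset (Fin n) // S.card = k} → Fin n := fun S => (g S).1 with hF
  have hle : ∀ v : Fin n, (Finset.univ.filter (fun S => F S = v)).card ≤ r v.val := by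
    intro v
    have h := Finset.card_le_card_of_injOn (f := fun S => (g S).2)
      (s := Finset.univ.filter (fun S => F S = v)) (t := Finset.range (r v.val)) ?_ ?_
    · simpa using h
    · intro S hS
      rw [Finset.mem_coe, Finset.mem_filter] at hS
      rw [Finset.mem_coe, Finset.mem_range]
      have h2 := (hmem S).2
      have h3 : (g S).1 = v := hS.2
      rw [h3] at h2
      exact h2
    · intro a ha b hb hab
      simp only [Finset.coe_filter, Set.mem_setOf_eq] at ha hb
      apply hginj
      have h1 : (g a).1 = v := ha.2
      have h2 : (g b).1 = v := hb.2
      exact Prod.ext (h1.trans h2.symm) hab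
  have hcount : ∑ v : Fin n, (Finset.univ.filter (fun S => F S = v)).card
      = Nat.choose n k := by
    rw [← Finset.card_eq_sum_card_fiberwise (f := F) (t := Finset.univ)
      (fun _ _ => Finset.mem_univ _)]
    rw [Finset.card_univ, Fintype.card_subtype]
    have : Finset.univ.filter (fun S : Finset (Fin n) => S.card = k)
        = Finset.powersetCard k Finset.univ := by
      rw [Finset.powersetCard_eq_filter, Finset.powerset_univ]
    rw [this, Finset.card_powersetCard, Finset.card_univ, Fintype.card_fin]
  have heq' : ∑ v : Fin n, r v.val = Nat.choose n k := by
    rw [Fin.sum_univ_eq_sum_range (fun i => r i) n]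
    exact heq
  have hfinal := (Finset.sum_eq_sum_iff_of_le
    (fun v (_ : v ∈ Finset.univ) => hle v)).mp (by rw [hcount, heq'])
  exact ⟨F, fun S => (hmem S).1, fun v => hfinal v (Finset.mem_univ v)⟩

private lemma backward_dir {n k : ℕ} (hk : 1 < k) (hn : k ≤ n) (r : ℕ → ℕ)
    (hr : ∀ i j, i ≤ j → j < n → r i ≤ r j)
    (hineq : ∀ j, 1 ≤ j → j ≤ n → Nat.choose j k ≤ ∑ i ∈ Finset.range j, r i)
    (heq : ∑ i ∈ Finset.range n, r i = Nat.choose n k) :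
    IsLosingScoreSequence n k r := by
  classical
  have hn0 : 0 < n := by omega
  obtain ⟨F, hF1, hF2⟩ := exists_score_function hk hn r hr hineq heq
  set F' : Finset (Fin n) → Fin n :=
    fun S => if h : S.card = k then F ⟨S, h⟩ else ⟨0, hn0⟩ with hF'
  have hF'mem : ∀ S : Finset (Fin n), S.card = k → F' S ∈ S := by
    intro S hS
    rw [hF']
    simp only [dif_pos hS]
    exact hF1 ⟨S, hS⟩
  set arc : Finset (Fin n) → List (Fin n) :=
    fun S => (S.erase (F' S)).sort (· ≤ ·) ++ [F' S] with harc
  have harcT : ∀ S : Finset (Fin n), S.card = k → (arc S).toFinset = S := by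
    intro S hS
    rw [harc]
    simp only [List.toFinset_append, Finset.sort_toFinset, List.toFinset_cons,
      List.toFinset_nil, insert_empty_eq]
    rw [Finset.union_comm, ← Finset.insert_eq, Finset.insert_erase (hF'mem S hS)]
  have harclen : ∀ S : Finset (Fin n), S.card = k → (arc S).length = k := by
    intro S hS
    rw [harc]
    simp only [List.length_append, Finset.length_sort, List.length_cons, List.length_nil]
    rw [Finset.card_erase_of_mem (hF'mem S hS), hS]
    omega
  have harcnd : ∀ S : Finset (Fin n), S.card = k → (arc S).Nodup := by
    intro S hS
    rw [harc, List.nodup_append]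
    refine ⟨Finset.sort_nodup _ _, List.nodup_singleton _, ?_⟩
    intro a ha b hb
    rw [Finset.mem_sort] at ha
    rw [List.mem_singleton] at hb
    exact fun h => (Finset.ne_of_mem_erase ha) (h.trans hb)
  have harclast : ∀ S : Finset (Fin n), (arc S).getLast? = some (F' S) :=
    fun S => List.getLast?_concat
  set P : Finset (Finset (Fin n)) := Finset.powersetCard k Finset.univ with hP
  have hPmem : ∀ S ∈ P, S.card = k := fun S hS => (Finset.mem_powersetCard.mp hS).2
  set H : Hypertournament n k :=
    { arcs := P.image arc
      nodup := by
        intro e he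
        obtain ⟨S, hS, rfl⟩ := Finset.mem_image.mp he
        exact harcnd S (hPmem S hS)
      len := by
        intro e he
        obtain ⟨S, hS, rfl⟩ := Finset.mem_image.mp he
        exact harclen S (hPmem S hS)
      complete := by
        intro S hS
        have hSP : S ∈ P := Finset.mem_powersetCard.mpr ⟨Finset.subset_univ S, hS⟩
        refine ⟨arc S, ⟨Finset.mem_image_of_mem _ hSP, harcT S hS⟩, ?_⟩
        rintro e ⟨he, heT⟩
        obtain ⟨S', hS', rfl⟩ := Finset.mem_image.mp he
        rw [harcT S' (hPmem S' hS')] at heT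
        rw [heT] } with hHdef
  refine ⟨H, Equiv.refl _, ?_⟩
  intro i
  simp only [Equiv.refl_apply]
  unfold losingScore
  have h1 : H.arcs.filter (fun e => e.getLast? = some i)
      = (P.filter (fun S => F' S = i)).image arc := by
    show (P.image arc).filter _ = _
    rw [Finset.filter_image]
    congr 1
    apply Finset.filter_congr
    intro S _
    rw [harclast S]
    simp
  rw [h1, Finset.card_image_of_injOn]
  · have h2 : (P.filter (fun S => F' S = i)).card
        = (Finset.univ.filter
            (fun S : {S : Finset (Fin n) // S.card = k} => F S = i)).card := by
      apply Finset.card_bij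
        (i := fun S hS => (⟨S, hPmem S (Finset.mem_filter.mp hS).1⟩ :
          {S : Finset (Fin n) // S.card = k}))
      · intro S hS
        rw [Finset.mem_filter]
        refine ⟨Finset.mem_univ _, ?_⟩
        have h3 := (Finset.mem_filter.mp hS).2
        rw [hF'] at h3
        simp only [dif_pos (hPmem S (Finset.mem_filter.mp hS).1)] at h3
        exact h3
      · intro a ha b hb hab
        exact congrArg Subtype.val hab
      · rintro ⟨S, hSk⟩ hS
        rw [Finset.mem_filter] at hS
        have hSP : S ∈ P := Finset.mem_powersetCard.mpr ⟨Finset.subset_univ S, hSk⟩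
        refine ⟨S, Finset.mem_filter.mpr ⟨hSP, ?_⟩, rfl⟩
        rw [hF']
        simp only [dif_pos hSk]
        exact hS.2
    rw [h2, hF2 i]
  · intro a ha b hb hab
    have haP := (Finset.mem_filter.mp (by exact ha)).1
    have hbP := (Finset.mem_filter.mp (by exact hb)).1
    rw [← harcT a (hPmem a haP), ← harcT b (hPmem b hbP), hab]

/-- Theorem 1.1 (Zhou, Yao, Zhang): a non-decreasing sequence `r 0, …, r (n-1)` of
non-negative integers is a losing score sequence of some k-hypertournament iff
`∑_{i<j} r i ≥ C(j,k)` for all `1 ≤ j ≤ n`, with equality when `j = n`. -/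
theorem losing_score_sequence_iff (n k : ℕ) (hk : 1 < k) (hn : k ≤ n)
    (r : ℕ → ℕ) (hr : ∀ i j, i ≤ j → j < n → r i ≤ r j) :
    IsLosingScoreSequence n k r ↔
      ((∀ j, 1 ≤ j → j ≤ n → Nat.choose j k ≤ ∑ i ∈ Finset.range j, r i) ∧
        ∑ i ∈ Finset.range n, r i = Nat.choose n k) := by
  classical
  have hk0 : 0 < k := by omega
  have hn0 : 0 < n := by omega
  constructor
  · rintro ⟨H, σ, hσ⟩
    constructor
    · intro j hj1 hjn
      set T : Finset (Fin n) := (Finset.range j).attachFin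
        (fun m hm => lt_of_lt_of_le (Finset.mem_range.mp hm) hjn) with hT
      set U : Finset (Fin n) := T.image σ with hU
      have hTcard : T.card = j := by
        rw [hT, Finset.card_attachFin, Finset.card_range]
      have hUcard : U.card = j := by
        rw [hU, Finset.card_image_of_injective _ σ.injective, hTcard]
      have h1 : ∑ i ∈ Finset.range j, r i = ∑ v ∈ U, losingScore H v := by
        rw [hU, Finset.sum_image (fun x _ y _ h => σ.injective h)]
        rw [show ∑ v ∈ T, losingScore H (σ v) = ∑ v ∈ T, r v.val from
          Finset.sum_congr rfl (fun v _ => (hσ v).symm)]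
        refine Finset.sum_bij (i := fun m hm =>
          (⟨m, lt_of_lt_of_le (Finset.mem_range.mp hm) hjn⟩ : Fin n)) ?_ ?_ ?_ ?_
        · intro m hm
          rw [hT, Finset.mem_attachFin]
          exact hm
        · intro a ha b hb hab
          exact congrArg Fin.val hab
        · intro v hv
          rw [hT, Finset.mem_attachFin] at hv
          exact ⟨v.val, hv, rfl⟩
        · intro a ha
          rfl
      rw [h1, ← hUcard]
      exact choose_le_sum_scores hk0 hn0 H U
    · rw [← Fin.sum_univ_eq_sum_range (fun i => r i) n]
      rw [show ∑ v : Fin n, r v.val = ∑ v : Fin n, losingScore H (σ v) from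
        Finset.sum_congr rfl (fun v _ => hσ v)]
      rw [Equiv.sum_comp σ (losingScore H)]
      exact total_scores hk0 hn0 H
  · rintro ⟨hineq, heq⟩
    exact backward_dir hk hn r hr hineq heq
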